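/- Let Ω ⊆ E be open, let X : Ω → E, and let h : Ω → ℝ be continuous on Ω with h x > 0 for all x ∈ Ω. Let a < 0 < b and let φ : ℝ → E satisfy φ t ∈ Ω and HasDerivAt φ (X (φ t)) t for every t ∈ (a, b). Define θ : ℝ → ℝ by θ t := ∫ r in (0, t), (h (φ r))⁻¹ (with the convention θ t = −∫ r in (t, 0), (h (φ r))⁻¹ for t < 0). Then: θ is strictly increasing on (a, b) and differentiable there with deriv θ t = (h (φ t))⁻¹; θ maps (a, b) bijectively onto an open interval J; and the composition ψ := φ ∘ θ⁻¹ (where θ⁻¹ : J → (a, b) is the inverse of the restriction of θ) satisfies HasDerivAt ψ (h (ψ s) • X (ψ s)) s for every s ∈ J. -/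

import Mathlib

open Set

theorem time_reparametrization (n : ℕ) (hn : 1 ≤ n)
    (Ω : Set (EuclideanSpace ℝ (Fin n))) (hΩ : IsOpen Ω)
    (X : EuclideanSpace ℝ (Fin n) → EuclideanSpace ℝ (Fin n))
    (h : EuclideanSpace ℝ (Fin n) → ℝ)
    (hh_cont : ContinuousOn h Ω) (hh_pos : ∀ x ∈ Ω, 0 < h x)
    (a b : ℝ) (ha : a < 0) (hb : 0 < b)
    (φ : ℝ → EuclideanSpace ℝ (Fin n))
    (hφΩ : ∀ t ∈ Ioo a b, φ t ∈ Ω)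
    (hφflow : ∀ t ∈ Ioo a b, HasDerivAt φ (X (φ t)) t) :
    StrictMonoOn (fun t => ∫ r in (0:ℝ)..t, (h (φ r))⁻¹) (Ioo a b) ∧
    (∀ t ∈ Ioo a b,
      HasDerivAt (fun t => ∫ r in (0:ℝ)..t, (h (φ r))⁻¹) ((h (φ t))⁻¹) t) ∧
    ∃ J : Set ℝ, IsOpen J ∧ IsPreconnected J ∧
      (fun t => ∫ r in (0:ℝ)..t, (h (φ r))⁻¹) '' Ioo a b = J ∧
      InjOn (fun t => ∫ r in (0:ℝ)..t, (h (φ r))⁻¹) (Ioo a b) ∧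
      ∃ σ : ℝ → ℝ,
        (∀ t ∈ Ioo a b, σ (∫ r in (0:ℝ)..t, (h (φ r))⁻¹) = t) ∧
        (∀ s ∈ J, σ s ∈ Ioo a b ∧ (∫ r in (0:ℝ)..(σ s), (h (φ r))⁻¹) = s) ∧
        ∀ s ∈ J, HasDerivAt (φ ∘ σ) (h (φ (σ s)) • X (φ (σ s))) s := by
  set g : ℝ → ℝ := fun r => (h (φ r))⁻¹ with hg_def
  set θ : ℝ → ℝ := fun t => ∫ r in (0:ℝ)..t, g r with hθ_def
  have h0 : (0:ℝ) ∈ Ioo a b := ⟨ha, hb⟩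
  have hgpos : ∀ t ∈ Ioo a b, 0 < g t := fun t ht => inv_pos.2 (hh_pos _ (hφΩ t ht))
  have hgca : ∀ t ∈ Ioo a b, ContinuousAt g t := by
    intro t ht
    exact ((hh_cont.continuousAt (hΩ.mem_nhds (hφΩ t ht))).comp
      (hφflow t ht).continuousAt).inv₀ (ne_of_gt (hh_pos _ (hφΩ t ht)))
  have hgcont : ContinuousOn g (Ioo a b) := fun t ht => (hgca t ht).continuousWithinAt
  -- FTC: derivative of θ
  have hderiv : ∀ t ∈ Ioo a b, HasDerivAt θ (g t) t := by
    intro t ht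
    refine intervalIntegral.integral_hasDerivAt_right ?_ ?_ (hgca t ht)
    · exact (hgcont.mono ((ordConnected_Ioo).uIcc_subset h0 ht)).intervalIntegrable
    · exact ContinuousAt.stronglyMeasurableAtFilter isOpen_Ioo hgca t ht
  have hθcont : ContinuousOn θ (Ioo a b) := fun t ht =>
    (hderiv t ht).continuousAt.continuousWithinAt
  have hmono : StrictMonoOn θ (Ioo a b) := by
    refine strictMonoOn_of_deriv_pos (convex_Ioo a b) hθcont ?_
    intro t ht
    rw [interior_Ioo] at ht
    rw [(hderiv t ht).deriv]
    exact hgpos t ht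
  refine ⟨hmono, hderiv, ?_⟩
  set J := θ '' Ioo a b with hJ_def
  have hJopen : IsOpen J := by
    rw [isOpen_iff_mem_nhds]
    rintro y ⟨t, ht, rfl⟩
    obtain ⟨t₁, ht₁⟩ := exists_between ht.1
    obtain ⟨t₂, ht₂⟩ := exists_between ht.2
    have h1 : t₁ ∈ Ioo a b := ⟨ht₁.1, ht₁.2.trans ht.2⟩
    have h2 : t₂ ∈ Ioo a b := ⟨ht.1.trans ht₂.1, ht₂.2⟩
    have hsub : Icc t₁ t₂ ⊆ Ioo a b := Icc_subset_Ioo ht₁.1 ht₂.2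
    have : Ioo (θ t₁) (θ t₂) ⊆ J := by
      refine subset_trans ?_ (image_mono (f := θ) (Ioo_subset_Ioo ht₁.1.le ht₂.2.le))
      exact intermediate_value_Ioo (ht₁.2.trans ht₂.1).le (hθcont.mono hsub)
    exact Filter.mem_of_superset
      (Ioo_mem_nhds (hmono h1 ht ht₁.2) (hmono ht h2 ht₂.1)) this
  have hJconn : IsPreconnected J := (isPreconnected_Ioo).image θ hθcont
  have hinj : InjOn θ (Ioo a b) := hmono.injOn
  set σ := Function.invFunOn θ (Ioo a b) with hσ_def
  have hσleft : ∀ t ∈ Ioo a b, σ (θ t) = t := fun t ht => hinj.leftInvOn_invFunOn ht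
  have hσmem : ∀ s ∈ J, σ s ∈ Ioo a b := by
    rintro s ⟨t, ht, rfl⟩; rw [hσleft t ht]; exact ht
  have hσright : ∀ s ∈ J, θ (σ s) = s := by
    rintro s ⟨t, ht, rfl⟩; rw [hσleft t ht]
  have hσimg : σ '' J = Ioo a b := by
    apply Subset.antisymm
    · rintro x ⟨s, hs, rfl⟩; exact hσmem s hs
    · intro t ht; exact ⟨θ t, mem_image_of_mem θ ht, hσleft t ht⟩
  have hσmono : StrictMonoOn σ J := by
    intro s1 hs1 s2 hs2 hlt
    by_contra hle
    push_neg at hle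
    have := hmono.monotoneOn (hσmem s2 hs2) (hσmem s1 hs1) hle
    rw [hσright s1 hs1, hσright s2 hs2] at this
    exact absurd this (not_le.2 hlt)
  have hσcont : ∀ s ∈ J, ContinuousAt σ s := by
    intro s hs
    refine hσmono.continuousAt_of_image_mem_nhds (hJopen.mem_nhds hs) ?_
    rw [hσimg]
    exact isOpen_Ioo.mem_nhds (hσmem s hs)
  refine ⟨J, hJopen, hJconn, rfl, hinj, σ, hσleft, fun s hs => ⟨hσmem s hs, hσright s hs⟩, ?_⟩
  intro s hs
  have htmem := hσmem s hs
  have hσderiv : HasDerivAt σ (h (φ (σ s))) s := by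
    have := HasDerivAt.of_local_left_inverse (hσcont s hs) (hderiv (σ s) htmem)
      (ne_of_gt (hgpos (σ s) htmem))
      (Filter.eventually_of_mem (hJopen.mem_nhds hs) hσright)
    rwa [hg_def, inv_inv] at this
  exact HasDerivAt.scomp (𝕜 := ℝ) (𝕜' := ℝ) s (hφflow (σ s) htmem) hσderiv
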